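/- Let t₃ : ℕ → ℕ be the ternary Thue–Morse word, defined by t₃(n) = (sum of the base-3 digits of n) mod 3 (equivalently, the fixed point starting with 0 of the morphism 0→012, 1→120, 2→201). Then its additive complexity is the periodic word 1 3 5 5 5 ⋯, i.e., ρ⁺_{t₃}(0) = 1, ρ⁺_{t₃}(1) = 3, and ρ⁺_{t₃}(n) = 5 for all n ≥ 2. -/

import Mathlib

/-- Sum of the letters of the length-`n` factor of `x` starting at position `i`. -/
def blockSum (x : ℕ → ℕ) (i n : ℕ) : ℕ := ∑ j ∈ Finset.range n, x (i + j)

/-- Additive complexity: the number of distinct letter-sums of length-`n` factors. -/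
noncomputable def addComplexity (x : ℕ → ℕ) (n : ℕ) : ℕ :=
  Set.ncard {s : ℕ | ∃ i : ℕ, blockSum x i n = s}

/-- Parikh vector of the length-`n` factor of `x` starting at position `i`. -/
def parikh (x : ℕ → ℕ) (i n : ℕ) : ℕ → ℕ :=
  fun a => ((Finset.range n).filter fun j => x (i + j) = a).card

/-- Abelian complexity: the number of distinct Parikh vectors of length-`n` factors. -/
noncomputable def abComplexity (x : ℕ → ℕ) (n : ℕ) : ℕ :=
  Set.ncard {P : ℕ → ℕ | ∃ i : ℕ, parikh x i n = P}

/-- `x` is the fixed point of the morphism `f` starting with the letter `a₀`: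
`x 0 = a₀` and `x` is the infinite concatenation `f (x 0) f (x 1) f (x 2) ⋯`. -/
def IsFixedPointOf (f : ℕ → List ℕ) (a₀ : ℕ) (x : ℕ → ℕ) : Prop :=
  x 0 = a₀ ∧ ∀ n j, j < (f (x n)).length →
    x ((∑ k ∈ Finset.range n, (f (x k)).length) + j) = (f (x n)).getD j 0

/-- The ternary Thue–Morse word: the base-3 digit sum, reduced mod 3. -/
def t3 (n : ℕ) : ℕ := (Nat.digits 3 n).sum % 3


/-! ### Auxiliary machinery -/

/-- Base-3 digit sum. -/
def S3 (n : ℕ) : ℕ := (Nat.digits 3 n).sum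

lemma t3_eq' (n : ℕ) : t3 n = S3 n % 3 := rfl

lemma t3_lt (n : ℕ) : t3 n < 3 := Nat.mod_lt _ (by norm_num)

lemma S3_mul3_add (m j : ℕ) (hj : j < 3) : S3 (3 * m + j) = S3 m + j := by
  rcases Nat.eq_zero_or_pos (3 * m + j) with h | h
  · have hm : m = 0 := by omega
    have hj0 : j = 0 := by omega
    simp [hm, hj0, S3]
  · unfold S3
    rw [Nat.digits_def' (by norm_num : 1 < 3) h]
    have h1 : (3 * m + j) % 3 = j := by omega
    have h2 : (3 * m + j) / 3 = m := by omega
    rw [h1, h2, List.sum_cons]; omega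

lemma S3_small {n : ℕ} (h : n < 3) : S3 n = n := by
  interval_cases n <;> norm_num [S3]

lemma S3_len_le {u t : ℕ} (hu : u < 3 ^ t) : (Nat.digits 3 u).length ≤ t := by
  by_contra h
  rcases Nat.eq_zero_or_pos u with rfl | hu0
  · simp at h
  · have h1 := Nat.base_pow_length_digits_le 3 u (by norm_num) (by omega)
    have h2 : (3:ℕ) ^ (t+1) ≤ 3 ^ (Nat.digits 3 u).length :=
      Nat.pow_le_pow_right (by norm_num) (by omega)
    have : (3:ℕ)^(t+1) = 3 * 3^t := by ring
    omega

lemma S3_add_pow_mul (t u x : ℕ) (hu : u < 3 ^ t) :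
    S3 (u + 3 ^ t * x) = S3 u + S3 x := by
  rcases Nat.eq_zero_or_pos x with rfl | hx
  · simp [S3]
  · have hlen : (Nat.digits 3 u).length ≤ t := S3_len_le hu
    have h := Nat.digits_append_zeroes_append_digits (b := 3)
      (k := t - (Nat.digits 3 u).length) (m := x) (n := u) (by norm_num) hx
    have ht : (Nat.digits 3 u).length + (t - (Nat.digits 3 u).length) = t := by omega
    rw [ht] at h
    unfold S3
    rw [← h]
    simp

lemma S3_pow (j : ℕ) : S3 (3 ^ j) = 1 := by
  have h := Nat.digits_base_pow_mul (b := 3) (k := j) (m := 1) (by norm_num) (by norm_num)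
  unfold S3
  rw [mul_one] at h
  rw [h]
  simp [Nat.digits_def' (by norm_num : 1 < 3)]

lemma S3_pow_sub_one (k : ℕ) : S3 (3 ^ k - 1) = 2 * k := by
  induction k with
  | zero => simp [S3]
  | succ k ih =>
    have h3 : (3:ℕ) ^ (k+1) = 3 * 3 ^ k := by ring
    have hp : (1:ℕ) ≤ 3 ^ k := Nat.one_le_pow _ _ (by norm_num)
    have hpos : 0 < 3 ^ (k+1) - 1 := by omega
    unfold S3
    rw [Nat.digits_def' (by norm_num : 1 < 3) hpos]
    have h1 : (3 ^ (k+1) - 1) % 3 = 2 := by omega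
    have h2 : (3 ^ (k+1) - 1) / 3 = 3 ^ k - 1 := by omega
    rw [h1, h2, List.sum_cons]
    unfold S3 at ih
    omega

/-- Pair realization: any pair of values at any distance `l ≥ 1` occurs in `t3`. -/
lemma t3_pair (l a b : ℕ) (hl : 1 ≤ l) (ha : a < 3) (hb : b < 3) :
    ∃ m, t3 m = a ∧ t3 (m + l) = b := by
  obtain ⟨j, hj⟩ : ∃ j, l ≤ 3 ^ j := ⟨l, (Nat.lt_pow_self (by norm_num : 1 < 3) : l < 3 ^ l).le⟩
  set w := S3 (3 ^ j - l) with hw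
  set k := (w + 2 * a + b + 2) % 3 with hk
  set c := (b + 2) % 3 with hc
  have hc3 : c < 3 := Nat.mod_lt _ (by norm_num)
  have hjk : (3:ℕ) ^ j ≤ 3 ^ (j + k) := Nat.pow_le_pow_right (by norm_num) (by omega)
  have hjk1 : (3:ℕ) ^ (j + k) < 3 ^ (j + k + 1) := Nat.pow_lt_pow_right (by norm_num) (by omega)
  refine ⟨(3 ^ (j + k) - l) + 3 ^ (j + k + 1) * c, ?_, ?_⟩
  · have h1 : S3 ((3 ^ (j + k) - l) + 3 ^ (j + k + 1) * c)
        = S3 (3 ^ (j + k) - l) + S3 c := S3_add_pow_mul _ _ _ (by omega)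
    have h2 : (3:ℕ) ^ (j + k) - l = (3 ^ j - l) + 3 ^ j * (3 ^ k - 1) := by
      have : (3:ℕ) ^ (j + k) = 3 ^ j * 3 ^ k := by rw [pow_add]
      have h1k : (1:ℕ) ≤ 3 ^ k := Nat.one_le_pow _ _ (by norm_num)
      cases' Nat.exists_eq_add_of_le h1k with d hd
      nlinarith [Nat.sub_add_cancel hj, Nat.sub_add_cancel h1k,
        Nat.sub_add_cancel (le_trans hj hjk)]
    have h3 : S3 ((3 ^ j - l) + 3 ^ j * (3 ^ k - 1)) = w + 2 * k := by
      rw [S3_add_pow_mul _ _ _ (by omega), S3_pow_sub_one, hw]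
    rw [t3_eq', h1, h2, h3, S3_small hc3]
    omega
  · have he : (3 ^ (j + k) - l) + 3 ^ (j + k + 1) * c + l
        = 3 ^ (j + k) + 3 ^ (j + k + 1) * c := by omega
    rw [t3_eq', he, S3_add_pow_mul _ _ _ (by omega), S3_pow, S3_small hc3]
    omega

lemma t3_mul3_add (m j : ℕ) (hj : j < 3) : t3 (3 * m + j) = (t3 m + j) % 3 := by
  rw [t3_eq', t3_eq', S3_mul3_add m j hj]; omega

lemma t3_m0 (m : ℕ) : t3 (3 * m) = t3 m := by
  have h := t3_mul3_add m 0 (by norm_num)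
  have := t3_lt m
  simpa [Nat.mod_eq_of_lt this] using h

lemma t3_m1 (m : ℕ) : t3 (3 * m + 1) = (t3 m + 1) % 3 := t3_mul3_add m 1 (by norm_num)

lemma t3_m2 (m : ℕ) : t3 (3 * m + 2) = (t3 m + 2) % 3 := t3_mul3_add m 2 (by norm_num)

/-- Prefix sums of `t3`. -/
def g (i : ℕ) : ℕ := ∑ k ∈ Finset.range i, t3 k

lemma g_succ (i : ℕ) : g (i + 1) = g i + t3 i := Finset.sum_range_succ _ _

lemma g_mul3 (m : ℕ) : g (3 * m) = 3 * m := by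
  induction m with
  | zero => simp [g]
  | succ m ih =>
    have a1 : g (3*m+1) = g (3*m) + t3 (3*m) := g_succ (3*m)
    have a2 : g (3*m+2) = g (3*m+1) + t3 (3*m+1) := g_succ (3*m+1)
    have a3 : g (3*m+3) = g (3*m+2) + t3 (3*m+2) := g_succ (3*m+2)
    have e : 3*(m+1) = 3*m+3 := by ring
    rw [e]
    have h0 := t3_m0 m; have h1 := t3_m1 m; have h2 := t3_m2 m
    have := t3_lt m
    omega

lemma g_1 (m : ℕ) : g (3 * m + 1) = 3 * m + t3 m := by
  have a1 : g (3*m+1) = g (3*m) + t3 (3*m) := g_succ (3*m)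
  rw [a1, g_mul3, t3_m0]

lemma g_2 (m : ℕ) : g (3 * m + 2) = 3 * m + t3 m + (t3 m + 1) % 3 := by
  have a2 : g (3*m+2) = g (3*m+1) + t3 (3*m+1) := g_succ (3*m+1)
  rw [a2, g_1, t3_m1]

lemma g_est (i : ℕ) : i ≤ g i + 1 ∧ g i ≤ i + 1 := by
  obtain ⟨m, r, hr, rfl⟩ : ∃ m r, r < 3 ∧ i = 3 * m + r :=
    ⟨i / 3, i % 3, Nat.mod_lt _ (by norm_num), (Nat.div_add_mod i 3).symm⟩
  have ht := t3_lt m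
  interval_cases r
  · rw [show 3*m+0 = 3*m by ring, g_mul3]; omega
  · rw [g_1]; omega
  · rw [g_2]; omega

lemma blockSum_g (i n : ℕ) : blockSum t3 i n + g i = g (i + n) := by
  induction n with
  | zero => simp [blockSum, g]
  | succ n ih =>
    rw [show i + (n+1) = (i+n)+1 by ring, g_succ, blockSum, Finset.sum_range_succ]
    rw [blockSum] at ih
    omega

lemma wit0 (n s q a b : ℕ) (hn : n = 3*q) (hq : 1 ≤ q) (ha : a < 3) (hb : b < 3)
    (harith : b + n = s + a) : ∃ i, blockSum t3 i n = s := by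
  obtain ⟨m, ham, hbm⟩ := t3_pair q a b hq ha hb
  refine ⟨3*m+1, ?_⟩
  have hbs := blockSum_g (3*m+1) n
  rw [g_1 m, show 3*m+1+n = 3*(m+q)+1 by omega, g_1 (m+q), ham, hbm] at hbs
  omega

lemma wit1 (n s q a b : ℕ) (hn : n = 3*q+1) (hq : 1 ≤ q) (ha : a < 3) (hb : b < 3)
    (harith : b + (b+1)%3 + n = s + a + 1) : ∃ i, blockSum t3 i n = s := by
  obtain ⟨m, ham, hbm⟩ := t3_pair q a b hq ha hb
  refine ⟨3*m+1, ?_⟩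
  have hbs := blockSum_g (3*m+1) n
  rw [g_1 m, show 3*m+1+n = 3*(m+q)+2 by omega, g_2 (m+q), ham, hbm] at hbs
  omega

lemma wit2 (n s q a b : ℕ) (hn : n = 3*q+2) (ha : a < 3) (hb : b < 3)
    (harith : n + 1 + b = s + a + (a+1)%3) : ∃ i, blockSum t3 i n = s := by
  obtain ⟨m, ham, hbm⟩ := t3_pair (q+1) a b (by omega) ha hb
  refine ⟨3*m+2, ?_⟩
  have hbs := blockSum_g (3*m+2) n
  rw [g_2 m, show 3*m+2+n = 3*(m+(q+1))+1 by omega, g_1 (m+(q+1)), ham, hbm] at hbs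
  omega

lemma exists_block (n s : ℕ) (hn : 2 ≤ n) (h1 : n ≤ s + 2) (h2 : s ≤ n + 2) :
    ∃ i, blockSum t3 i n = s := by
  have h3 : n % 3 < 3 := Nat.mod_lt _ (by norm_num)
  have hd : n = 3 * (n / 3) + n % 3 := (Nat.div_add_mod n 3).symm
  have h5 : s + 2 = n ∨ s + 1 = n ∨ s = n ∨ s = n + 1 ∨ s = n + 2 := by omega
  interval_cases h : n % 3
  · exact wit0 n s (n/3) (n - s) (s - n) (by omega) (by omega) (by omega) (by omega) (by omega)
  · rcases h5 with h5|h5|h5|h5|h5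
    · exact wit1 n s (n/3) 2 0 (by omega) (by omega) (by omega) (by omega) (by omega)
    · exact wit1 n s (n/3) 1 0 (by omega) (by omega) (by omega) (by omega) (by omega)
    · exact wit1 n s (n/3) 0 0 (by omega) (by omega) (by omega) (by omega) (by omega)
    · exact wit1 n s (n/3) 0 2 (by omega) (by omega) (by omega) (by omega) (by omega)
    · exact wit1 n s (n/3) 0 1 (by omega) (by omega) (by omega) (by omega) (by omega)
  · rcases h5 with h5|h5|h5|h5|h5
    · exact wit2 n s (n/3) 1 0 (by omega) (by omega) (by omega) (by omega)
    · exact wit2 n s (n/3) 2 0 (by omega) (by omega) (by omega) (by omega)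
    · exact wit2 n s (n/3) 0 0 (by omega) (by omega) (by omega) (by omega)
    · exact wit2 n s (n/3) 0 1 (by omega) (by omega) (by omega) (by omega)
    · exact wit2 n s (n/3) 0 2 (by omega) (by omega) (by omega) (by omega)

lemma block_bound (i n s : ℕ) (h : blockSum t3 i n = s) : n ≤ s + 2 ∧ s ≤ n + 2 := by
  have hbs := blockSum_g i n
  have e1 := g_est i
  have e2 := g_est (i + n)
  omega

/-- The additive complexity of the ternary Thue–Morse word is 1 3 5 5 5 ⋯. -/
theorem ternary_thue_morse_additive_complexity :
    addComplexity t3 0 = 1 ∧ addComplexity t3 1 = 3 ∧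
    ∀ n, 2 ≤ n → addComplexity t3 n = 5 := by
  refine ⟨?_, ?_, ?_⟩
  · have h : {s : ℕ | ∃ i : ℕ, blockSum t3 i 0 = s} = {0} := by
      ext s; simp [blockSum, eq_comm]
    rw [addComplexity, h, Set.ncard_singleton]
  · have h : {s : ℕ | ∃ i : ℕ, blockSum t3 i 1 = s} = {0, 1, 2} := by
      ext s
      simp only [Set.mem_setOf_eq, blockSum, Finset.sum_range_one, add_zero,
        Set.mem_insert_iff, Set.mem_singleton_iff]
      constructor
      · rintro ⟨i, rfl⟩; have := t3_lt i; omega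
      · rintro (rfl | rfl | rfl)
        exacts [⟨0, by norm_num [t3]⟩, ⟨1, by norm_num [t3]⟩, ⟨2, by norm_num [t3]⟩]
    rw [addComplexity, h]
    rw [Set.ncard_insert_of_notMem (by norm_num) ((Set.finite_singleton 2).insert 1),
      Set.ncard_insert_of_notMem (by norm_num) (Set.finite_singleton 2),
      Set.ncard_singleton]
  · intro n hn
    have h : {s : ℕ | ∃ i : ℕ, blockSum t3 i n = s} = ↑(Finset.Icc (n-2) (n+2)) := by
      ext s
      simp only [Set.mem_setOf_eq, Finset.coe_Icc, Set.mem_Icc]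
      constructor
      · rintro ⟨i, hi⟩; have := block_bound i n s hi; omega
      · rintro ⟨hs1, hs2⟩; exact exists_block n s hn (by omega) hs2
    rw [addComplexity, h, Set.ncard_coe_finset, Nat.card_Icc]
    omega
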